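/- For n ≥ 5 and 1 ≤ g ≤ n+2, if V' consists of a vertex v of FQ_n together with g−1 of its neighbours, then |N_{FQ_n}(V')| = g(n+1) − g(g+1)/2 + 1. -/

import Mathlib

/-- The `n`-dimensional folded hypercube: vertices are binary strings of length `n`,
adjacent iff they differ in exactly one coordinate or in all coordinates. -/
def foldedCube (n : ℕ) : SimpleGraph (Fin n → Bool) :=
  SimpleGraph.fromRel (fun u v =>
    (Finset.univ.filter (fun i => u i ≠ v i)).card = 1 ∨ ∀ i, u i ≠ v i)

/-- External neighbourhood of a vertex set. -/
def extNbhd {V : Type*} (G : SimpleGraph V) (S : Set V) : Set V :=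
  {w | w ∉ S ∧ ∃ v ∈ S, G.Adj v w}

namespace Stmt9Aux

open Finset

variable {n : ℕ}

/-- Encode a finset of coordinates as the vertex differing from `v` exactly there. -/
def phi (v : Fin n → Bool) (s : Finset (Fin n)) : Fin n → Bool :=
  fun i => if i ∈ s then !(v i) else v i

/-- Decode a vertex into its difference set with `v`. -/
def psi (v : Fin n → Bool) (w : Fin n → Bool) : Finset (Fin n) :=
  Finset.univ.filter fun i => w i ≠ v i

lemma phi_psi (v w : Fin n → Bool) : phi v (psi v w) = w := by
  funext i
  simp only [phi, psi, Finset.mem_filter, Finset.mem_univ, true_and]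
  by_cases h : w i = v i
  · simp [h]
  · simp only [h, if_pos, ne_eq, not_false_iff]
    cases hv : v i <;> cases hw : w i <;> simp_all

lemma psi_phi (v : Fin n → Bool) (s : Finset (Fin n)) : psi v (phi v s) = s := by
  ext i
  simp only [phi, psi, Finset.mem_filter, Finset.mem_univ, true_and]
  by_cases h : i ∈ s <;> simp [h]

lemma phi_inj (v : Fin n → Bool) : Function.Injective (phi v) := by
  intro s t h
  rw [← psi_phi v s, h, psi_phi]

lemma psi_inj (v : Fin n → Bool) : Function.Injective (psi v) := by
  intro w w' h
  rw [← phi_psi v w, h, phi_psi]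

lemma phi_empty (v : Fin n → Bool) : phi v ∅ = v := by
  funext i; simp [phi]

lemma diff_filter (v : Fin n → Bool) (s t : Finset (Fin n)) :
    (Finset.univ.filter fun i => phi v s i ≠ phi v t i) = symmDiff s t := by
  ext i
  rw [Finset.mem_filter]
  simp only [Finset.mem_filter, Finset.mem_univ, true_and, Finset.mem_symmDiff, phi]
  by_cases hs : i ∈ s <;> by_cases ht : i ∈ t <;> cases hv : v i <;> simp [hs, ht]

lemma adj_phi (v : Fin n → Bool) (hn : 1 ≤ n) (s t : Finset (Fin n)) :
    (foldedCube n).Adj (phi v s) (phi v t) ↔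
      ((symmDiff s t).card = 1 ∨ (symmDiff s t).card = n) := by
  have hall : ∀ (a b : Fin n → Bool),
      ((∀ i, a i ≠ b i) ↔ (Finset.univ.filter fun i => a i ≠ b i) = Finset.univ) := by
    intro a b
    constructor
    · intro h; ext i; simp [h i]
    · intro h i
      have hi : i ∈ (Finset.univ : Finset (Fin n)) := Finset.mem_univ i
      rw [← h] at hi
      simpa using hi
  have hsymm : (Finset.univ.filter fun i => phi v t i ≠ phi v s i) = symmDiff s t := by
    rw [← diff_filter v s t]; congr 1; funext i; simp [ne_comm]
  rw [foldedCube, SimpleGraph.fromRel_adj]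
  rw [hall, hall, hsymm, diff_filter]
  have hcard : (symmDiff s t) = Finset.univ ↔ (symmDiff s t).card = n := by
    rw [← Finset.card_eq_iff_eq_univ, Fintype.card_fin]
  constructor
  · rintro ⟨-, h | h⟩ <;> tauto
  · intro h
    refine ⟨?_, by tauto⟩
    intro hst
    have h0 : (symmDiff s t).card = 0 := by
      have hst' : s = t := phi_inj v hst
      subst hst'
      simp [symmDiff_self]
    omega

lemma symmDiff_univ' (t : Finset (Fin n)) : symmDiff (Finset.univ : Finset (Fin n)) t = tᶜ := by
  rw [← Finset.top_eq_univ, symmDiff_comm, symmDiff_top, hnot_eq_compl]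

/-- `2 * (k choose 2) = k * (k-1)` over ℤ. -/
lemma two_mul_choose_two (k : ℕ) : (k.choose 2 : ℤ) * 2 = k * ((k : ℤ) - 1) := by
  cases k with
  | zero => simp
  | succ m =>
    have hdvd : 2 ∣ (m + 1) * m := by
      have := Nat.even_mul_succ_self m
      exact (even_iff_two_dvd.mp (by rwa [mul_comm] at this))
    have h2 : (m + 1).choose 2 * 2 = (m + 1) * m := by
      rw [Nat.choose_two_right]
      simp only [Nat.add_sub_cancel]
      exact Nat.div_mul_cancel hdvd
    have h3 : ((m + 1).choose 2 : ℤ) * 2 = ((m + 1) * m : ℕ) := by exact_mod_cast h2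
    rw [h3]; push_cast; ring

lemma erase_inj : Function.Injective (fun i : Fin n => Finset.univ.erase i) := by
  intro i j h
  dsimp only at h
  by_contra hne
  have hmem : i ∈ Finset.univ.erase j := Finset.mem_erase.2 ⟨hne, Finset.mem_univ i⟩
  rw [← h] at hmem
  exact (Finset.mem_erase.1 hmem).1 rfl

lemma sd_singleton_singleton {i k : Fin n} (h : i ≠ k) :
    symmDiff ({i} : Finset (Fin n)) {k} = {i, k} := by
  ext x; by_cases hx : x = i <;> by_cases hx2 : x = k <;> simp_all [Finset.mem_symmDiff]

lemma sd_singleton_pair {i k : Fin n} (h : i ≠ k) :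
    symmDiff ({i} : Finset (Fin n)) {i, k} = {k} := by
  ext x; by_cases hx : x = i <;> by_cases hx2 : x = k <;> simp_all [Finset.mem_symmDiff]

lemma sd_singleton_erase (i : Fin n) :
    symmDiff ({i} : Finset (Fin n)) (Finset.univ.erase i) = Finset.univ := by
  ext x; by_cases hx : x = i <;> simp_all [Finset.mem_symmDiff]

end Stmt9Aux

open Stmt9Aux Finset

theorem stmt9 (n g : ℕ) (hn : 5 ≤ n) (hg1 : 1 ≤ g) (hg2 : g ≤ n + 2)
    (v : Fin n → Bool) (V' : Finset (Fin n → Bool)) (hv : v ∈ V')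
    (hadj : ∀ u ∈ V', u ≠ v → (foldedCube n).Adj v u) (hV' : V'.card = g) :
    ((extNbhd (foldedCube n) (↑V' : Set (Fin n → Bool))).ncard : ℤ) =
      (g : ℤ) * (n + 1) - g * (g + 1) / 2 + 1 := by
  classical
  have hn1 : 1 ≤ n := by omega
  set W : Finset (Finset (Fin n)) := V'.image (psi v) with hWdef
  have hWphi : ∀ s : Finset (Fin n), s ∈ W ↔ phi v s ∈ V' := by
    intro s
    constructor
    · rintro hs
      obtain ⟨w, hwV, hws⟩ := Finset.mem_image.1 hs
      rw [← hws, phi_psi]; exact hwV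
    · intro hs
      exact Finset.mem_image.2 ⟨phi v s, hs, psi_phi v s⟩
  have hempty : (∅ : Finset (Fin n)) ∈ W := by
    rw [hWphi, phi_empty]; exact hv
  have hstruct : ∀ s ∈ W, s = ∅ ∨ s.card = 1 ∨ s = Finset.univ := by
    intro s hs
    by_cases hse : s = ∅
    · exact Or.inl hse
    · right
      have hsv : phi v s ≠ v := by
        rw [← phi_empty v]
        exact fun h => hse (phi_inj v h)
      have hadj' := hadj (phi v s) ((hWphi s).1 hs) hsv
      have hadj'' : (foldedCube n).Adj (phi v ∅) (phi v s) := by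
        rw [phi_empty]; exact hadj'
      rw [adj_phi v hn1] at hadj''
      rw [show (∅ : Finset (Fin n)) = ⊥ from rfl, bot_symmDiff] at hadj''
      rcases hadj'' with h | h
      · exact Or.inl h
      · exact Or.inr ((Finset.card_eq_iff_eq_univ s).1 (by rw [h, Fintype.card_fin]))
  have hcardW : ∀ s ∈ W, s.card = 0 ∨ s.card = 1 ∨ s.card = n := by
    intro s hs
    rcases hstruct s hs with h | h | h
    · left; simp [h]
    · right; left; exact h
    · right; right; rw [h, Finset.card_univ, Fintype.card_fin]
  set A : Finset (Fin n) := Finset.univ.filter (fun i => ({i} : Finset (Fin n)) ∈ W) with hAdef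
  have hA : ∀ i : Fin n, ({i} : Finset (Fin n)) ∈ W ↔ i ∈ A := by
    intro i; simp [hAdef]
  have han : A.card ≤ n := by
    have := Finset.card_le_card (Finset.subset_univ A)
    rwa [Finset.card_univ, Fintype.card_fin] at this
  -- the four pieces of the external neighbourhood, in coordinate-set form
  set S1 : Finset (Finset (Fin n)) := (Finset.univ \ A).image fun j => ({j} : Finset (Fin n))
    with hS1def
  set S2 : Finset (Finset (Fin n)) :=
    if Finset.univ ∈ W then (∅ : Finset (Finset (Fin n))) else {Finset.univ} with hS2def
  set S3 : Finset (Finset (Fin n)) :=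
    (Finset.univ.powersetCard 2).filter fun s => (s ∩ A).Nonempty with hS3def
  set S4 : Finset (Finset (Fin n)) :=
    (if Finset.univ ∈ W then Finset.univ else A).image fun i => Finset.univ.erase i with hS4def
  set NS : Finset (Finset (Fin n)) := S1 ∪ (S2 ∪ (S3 ∪ S4)) with hNSdef
  -- cardinalities of elements of the pieces
  have hS1mem : ∀ s ∈ S1, s.card = 1 := by
    intro s hs
    obtain ⟨j, -, rfl⟩ := Finset.mem_image.1 hs
    simp
  have hS2mem : ∀ s ∈ S2, s.card = n := by
    intro s hs
    rw [hS2def] at hs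
    split at hs
    · simp at hs
    · rw [Finset.mem_singleton.1 hs, Finset.card_univ, Fintype.card_fin]
  have hS3mem : ∀ s ∈ S3, s.card = 2 := by
    intro s hs
    exact (Finset.mem_powersetCard.1 (Finset.mem_filter.1 hs).1).2
  have hS4mem : ∀ s ∈ S4, s.card = n - 1 := by
    intro s hs
    obtain ⟨i, -, rfl⟩ := Finset.mem_image.1 hs
    rw [Finset.card_erase_of_mem (Finset.mem_univ i), Finset.card_univ, Fintype.card_fin]
  -- the main structural identity
  have hmain : extNbhd (foldedCube n) (↑V' : Set (Fin n → Bool)) = ↑(NS.image (phi v)) := by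
    ext w
    simp only [extNbhd, Set.mem_setOf_eq, Finset.coe_image, Set.mem_image, Finset.mem_coe]
    constructor
    · rintro ⟨hwV, x, hxV, hadjx⟩
      refine ⟨psi v w, ?_, phi_psi v w⟩
      have htW : psi v w ∉ W := by
        intro h
        apply hwV
        have := (hWphi _).1 h
        rwa [phi_psi] at this
      have hsW : psi v x ∈ W := Finset.mem_image_of_mem _ hxV
      have hadj2 : (foldedCube n).Adj (phi v (psi v x)) (phi v (psi v w)) := by
        rw [phi_psi, phi_psi]; exact hadjx
      rw [adj_phi v hn1] at hadj2
      set s := psi v x with hsdef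
      set t := psi v w with htdef
      rcases hstruct _ hsW with hs0 | hs1 | hsu
      · -- s = ∅  : t is a singleton or univ
        rw [hs0, show (∅ : Finset (Fin n)) = ⊥ from rfl, bot_symmDiff] at hadj2
        rcases hadj2 with h1 | hnn
        · obtain ⟨j, hj⟩ := Finset.card_eq_one.1 h1
          have hjA : j ∉ A := by
            intro hjA
            exact htW (hj ▸ (hA j).2 hjA)
          refine Finset.mem_union_left _ (Finset.mem_image.2 ⟨j, ?_, hj.symm⟩)
          simp [hjA]
        · have htu : t = Finset.univ :=
            (Finset.card_eq_iff_eq_univ t).1 (by rw [hnn, Fintype.card_fin])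
          have huW : Finset.univ ∉ W := htu ▸ htW
          refine Finset.mem_union_right _ (Finset.mem_union_left _ ?_)
          rw [hS2def, if_neg huW]
          simp [htu]
      · -- s is a singleton {i} with i ∈ A
        obtain ⟨i, hi⟩ := Finset.card_eq_one.1 hs1
        have hiA : i ∈ A := (hA i).1 (hi ▸ hsW)
        rw [hi] at hadj2
        rcases hadj2 with h1 | hnn
        · obtain ⟨k, hk⟩ := Finset.card_eq_one.1 h1
          have ht : t = symmDiff ({i} : Finset (Fin n)) {k} := by
            have hcan := symmDiff_symmDiff_cancel_left ({i} : Finset (Fin n)) t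
            rw [hk] at hcan
            exact hcan.symm
          by_cases hik : k = i
          · exfalso
            apply htW
            rw [ht, hik, symmDiff_self]
            exact hempty
          · have hik' : i ≠ k := fun h => hik h.symm
            rw [ht, sd_singleton_singleton hik']
            refine Finset.mem_union_right _ (Finset.mem_union_right _
              (Finset.mem_union_left _ ?_))
            rw [hS3def]
            refine Finset.mem_filter.2 ⟨Finset.mem_powersetCard.2
              ⟨Finset.subset_univ _, Finset.card_pair hik'⟩, ⟨i, ?_⟩⟩
            simp [hiA]
        · have huniv : symmDiff ({i} : Finset (Fin n)) t = Finset.univ :=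
            (Finset.card_eq_iff_eq_univ _).1 (by rw [hnn, Fintype.card_fin])
          have ht : t = Finset.univ.erase i := by
            have hcan := symmDiff_symmDiff_cancel_left ({i} : Finset (Fin n)) t
            rw [huniv] at hcan
            rw [← hcan, ← Finset.top_eq_univ, symmDiff_top, hnot_eq_compl, Finset.top_eq_univ,
              Finset.compl_singleton]
          refine Finset.mem_union_right _ (Finset.mem_union_right _
            (Finset.mem_union_right _ ?_))
          rw [hS4def]
          refine Finset.mem_image.2 ⟨i, ?_, ht.symm⟩
          split
          · exact Finset.mem_univ i
          · exact hiA
      · -- s = univ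
        have huW : Finset.univ ∈ W := hsu ▸ hsW
        rw [hsu, symmDiff_univ'] at hadj2
        rcases hadj2 with h1 | hnn
        · obtain ⟨j, hj⟩ := Finset.card_eq_one.1 h1
          have ht : t = Finset.univ.erase j := by
            have := congrArg (·ᶜ) hj
            simp only [compl_compl] at this
            rw [this, Finset.compl_singleton]
          refine Finset.mem_union_right _ (Finset.mem_union_right _
            (Finset.mem_union_right _ ?_))
          rw [hS4def, if_pos huW]
          exact Finset.mem_image.2 ⟨j, Finset.mem_univ j, ht.symm⟩
        · exfalso
          have htc : tᶜ = Finset.univ :=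
            (Finset.card_eq_iff_eq_univ _).1 (by rw [hnn, Fintype.card_fin])
          have : t = (∅ : Finset (Fin n)) := by
            have := congrArg (·ᶜ) htc
            simp only [compl_compl] at this
            rw [this, ← Finset.top_eq_univ, compl_top, Finset.bot_eq_empty]
          exact htW (this ▸ hempty)
    · rintro ⟨t, htNS, rfl⟩
      have key : t ∉ W ∧ ∃ s ∈ W, ((symmDiff s t).card = 1 ∨ (symmDiff s t).card = n) := by
        rcases Finset.mem_union.1 htNS with h1 | h'
        · -- S1 : singletons outside A
          obtain ⟨j, hj, rfl⟩ := Finset.mem_image.1 h1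
          have hjA : j ∉ A := (Finset.mem_sdiff.1 hj).2
          refine ⟨fun h => hjA ((hA j).1 h), ∅, hempty, Or.inl ?_⟩
          rw [show (∅ : Finset (Fin n)) = ⊥ from rfl, bot_symmDiff]
          simp
        rcases Finset.mem_union.1 h' with h2 | h''
        · -- S2 : univ, when univ ∉ W
          rw [hS2def] at h2
          by_cases hu : Finset.univ ∈ W
          · rw [if_pos hu] at h2; simp at h2
          · rw [if_neg hu] at h2
            rw [Finset.mem_singleton.1 h2]
            refine ⟨hu, ∅, hempty, Or.inr ?_⟩
            rw [show (∅ : Finset (Fin n)) = ⊥ from rfl, bot_symmDiff,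
              Finset.card_univ, Fintype.card_fin]
        rcases Finset.mem_union.1 h'' with h3 | h4
        · -- S3 : pairs meeting A
          obtain ⟨hpc, i, hiT⟩ := Finset.mem_filter.1 h3
          have htc : t.card = 2 := (Finset.mem_powersetCard.1 hpc).2
          obtain ⟨hit, hiA⟩ := Finset.mem_inter.1 hiT
          have htW : t ∉ W := by
            intro h
            have := hcardW t h
            omega
          refine ⟨htW, {i}, (hA i).2 hiA, Or.inl ?_⟩
          obtain ⟨x, y, hxy, rfl⟩ := Finset.card_eq_two.1 htc
          rcases Finset.mem_insert.1 hit with rfl | hiy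
          · rw [sd_singleton_pair hxy]; simp
          · rw [Finset.mem_singleton.1 hiy] at hit hiA ⊢
            rw [Finset.pair_comm x y, sd_singleton_pair (fun h => hxy h.symm)]
            simp
        · -- S4 : co-singletons
          obtain ⟨i, hi, rfl⟩ := Finset.mem_image.1 h4
          have htW : Finset.univ.erase i ∉ W := by
            intro h
            have hc := hcardW _ h
            rw [Finset.card_erase_of_mem (Finset.mem_univ i), Finset.card_univ,
              Fintype.card_fin] at hc
            omega
          by_cases hu : Finset.univ ∈ W
          · refine ⟨htW, Finset.univ, hu, Or.inl ?_⟩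
            rw [symmDiff_univ', ← Finset.compl_singleton, compl_compl]
            simp
          · rw [if_neg hu] at hi
            refine ⟨htW, {i}, (hA i).2 hi, Or.inr ?_⟩
            rw [sd_singleton_erase, Finset.card_univ, Fintype.card_fin]
      obtain ⟨htW, s, hsW, hadj2⟩ := key
      refine ⟨fun h => htW ((hWphi t).2 h), phi v s, (hWphi s).1 hsW, ?_⟩
      rw [adj_phi v hn1]
      exact hadj2
  -- cardinalities of the pieces
  have hcard1 : S1.card = n - A.card := by
    rw [hS1def, Finset.card_image_of_injective _ Finset.singleton_injective,
      Finset.card_sdiff_of_subset (Finset.subset_univ A), Finset.card_univ, Fintype.card_fin]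
  have hcard2 : S2.card = if Finset.univ ∈ W then 0 else 1 := by
    rw [hS2def]; split <;> simp
  have hfilterneg : ((Finset.univ.powersetCard 2).filter fun s : Finset (Fin n) =>
      ¬ (s ∩ A).Nonempty) = (Finset.univ \ A).powersetCard 2 := by
    ext s
    simp only [Finset.mem_filter, Finset.mem_powersetCard, Finset.subset_univ, true_and,
      Finset.not_nonempty_iff_eq_empty]
    constructor
    · rintro ⟨hc, he⟩
      refine ⟨fun x hx => Finset.mem_sdiff.2 ⟨Finset.mem_univ x, fun hxA => ?_⟩, hc⟩
      have : x ∈ s ∩ A := Finset.mem_inter.2 ⟨hx, hxA⟩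
      simp [he] at this
    · rintro ⟨hsub, hc⟩
      refine ⟨hc, ?_⟩
      ext x
      simp only [Finset.mem_inter, Finset.notMem_empty, iff_false, not_and]
      intro hx
      exact (Finset.mem_sdiff.1 (hsub hx)).2
  have hcard3 : S3.card = n.choose 2 - (n - A.card).choose 2 := by
    have h := Finset.card_filter_add_card_filter_not
      (s := Finset.univ.powersetCard 2) (p := fun s : Finset (Fin n) => (s ∩ A).Nonempty)
    rw [hfilterneg] at h
    rw [Finset.card_powersetCard, Finset.card_powersetCard, Finset.card_univ, Fintype.card_fin,
      Finset.card_sdiff_of_subset (Finset.subset_univ A), Finset.card_univ, Fintype.card_fin] at h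
    rw [hS3def]
    omega
  have hcard4 : S4.card = if Finset.univ ∈ W then n else A.card := by
    rw [hS4def, Finset.card_image_of_injective _ erase_inj]
    split <;> simp [Finset.card_univ]
  -- total cardinality
  have hd34 : Disjoint S3 S4 := by
    rw [Finset.disjoint_left]
    intro s h3 h4
    have := hS3mem s h3
    have := hS4mem s h4
    omega
  have hd234 : Disjoint S2 (S3 ∪ S4) := by
    rw [Finset.disjoint_left]
    intro s h2 h34
    have := hS2mem s h2
    rcases Finset.mem_union.1 h34 with h | h
    · have := hS3mem s h; omega
    · have := hS4mem s h; omega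
  have hd1234 : Disjoint S1 (S2 ∪ (S3 ∪ S4)) := by
    rw [Finset.disjoint_left]
    intro s h1 hr
    have := hS1mem s h1
    rcases Finset.mem_union.1 hr with h | h
    · have := hS2mem s h; omega
    rcases Finset.mem_union.1 h with h | h
    · have := hS3mem s h; omega
    · have := hS4mem s h; omega
  have hNScard : NS.card = (n - A.card) + ((if Finset.univ ∈ W then 0 else 1) +
      ((n.choose 2 - (n - A.card).choose 2) + (if Finset.univ ∈ W then n else A.card))) := by
    rw [hNSdef, Finset.card_union_of_disjoint hd1234, Finset.card_union_of_disjoint hd234,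
      Finset.card_union_of_disjoint hd34, hcard1, hcard2, hcard3, hcard4]
  -- the cardinality of W determines g
  have hWcard : W.card = g := by
    rw [hWdef, Finset.card_image_of_injective _ (psi_inj v), hV']
  have hne : Nonempty (Fin n) := ⟨⟨0, by omega⟩⟩
  have hunivne : (Finset.univ : Finset (Fin n)) ≠ ∅ := Finset.univ_nonempty.ne_empty
  have hWeq : W = insert (∅ : Finset (Fin n))
      ((A.image fun i => ({i} : Finset (Fin n))) ∪
        (if Finset.univ ∈ W then {(Finset.univ : Finset (Fin n))} else ∅)) := by
    ext s
    constructor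
    · intro hs
      rcases hstruct s hs with h | h | h
      · simp [h]
      · obtain ⟨i, rfl⟩ := Finset.card_eq_one.1 h
        have hiA : i ∈ A := (hA i).1 hs
        exact Finset.mem_insert.2 (Or.inr (Finset.mem_union.2 (Or.inl
          (Finset.mem_image.2 ⟨i, hiA, rfl⟩))))
      · subst h
        have hu : Finset.univ ∈ W := hs
        exact Finset.mem_insert.2 (Or.inr (Finset.mem_union.2 (Or.inr
          (by rw [if_pos hu]; exact Finset.mem_singleton_self _))))
    · intro hs
      rcases Finset.mem_insert.1 hs with h | h
      · subst h; exact hempty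
      rcases Finset.mem_union.1 h with h | h
      · obtain ⟨i, hiA, rfl⟩ := Finset.mem_image.1 h
        exact (hA i).2 hiA
      · by_cases hu : Finset.univ ∈ W
        · rw [if_pos hu] at h
          rw [Finset.mem_singleton.1 h]; exact hu
        · rw [if_neg hu] at h
          simp at h
  have hgval : g = 1 + A.card + (if Finset.univ ∈ W then 1 else 0) := by
    have h1 : (A.image fun i => ({i} : Finset (Fin n))).card = A.card :=
      Finset.card_image_of_injective _ Finset.singleton_injective
    have hifcard : (if Finset.univ ∈ W then ({(Finset.univ : Finset (Fin n))} :
        Finset (Finset (Fin n))) else ∅).card = if Finset.univ ∈ W then 1 else 0 := by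
      split <;> simp
    have hdisj : Disjoint (A.image fun i => ({i} : Finset (Fin n)))
        (if Finset.univ ∈ W then ({(Finset.univ : Finset (Fin n))} :
          Finset (Finset (Fin n))) else ∅) := by
      rw [Finset.disjoint_left]
      intro s hs hs2
      obtain ⟨i, -, rfl⟩ := Finset.mem_image.1 hs
      split at hs2
      · have := Finset.mem_singleton.1 hs2
        have hc := congrArg Finset.card this
        rw [Finset.card_singleton, Finset.card_univ, Fintype.card_fin] at hc
        omega
      · simp at hs2
    have hnotmem : (∅ : Finset (Fin n)) ∉
        ((A.image fun i => ({i} : Finset (Fin n))) ∪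
          (if Finset.univ ∈ W then ({(Finset.univ : Finset (Fin n))} :
            Finset (Finset (Fin n))) else ∅)) := by
      intro h
      rcases Finset.mem_union.1 h with h | h
      · obtain ⟨i, -, hi⟩ := Finset.mem_image.1 h
        exact Finset.singleton_ne_empty i hi
      · split at h
        · exact hunivne (Finset.mem_singleton.1 h).symm
        · simp at h
    rw [← hWcard]
    conv_lhs => rw [hWeq]
    rw [Finset.card_insert_of_notMem hnotmem, Finset.card_union_of_disjoint hdisj, h1, hifcard]
    omega
  -- final computation
  rw [hmain, Set.ncard_coe_finset, Finset.card_image_of_injective _ (phi_inj v), hNScard]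
  have hchoosele : (n - A.card).choose 2 ≤ n.choose 2 := Nat.choose_le_choose 2 (by omega)
  have h2C := two_mul_choose_two n
  have h2C' := two_mul_choose_two (n - A.card)
  have hcast : ((n - A.card : ℕ) : ℤ) = (n : ℤ) - A.card := by
    rw [Nat.cast_sub han]
  rw [hcast] at h2C'
  have hQ : ((g : ℤ) * ((g : ℤ) + 1)) % 2 = 0 :=
    Int.even_iff.1 (Int.even_mul_succ_self (g : ℤ))
  by_cases hu : Finset.univ ∈ W
  · rw [if_pos hu, if_pos hu]
    have hga : (g : ℤ) = (A.card : ℤ) + 2 := by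
      rw [hgval, if_pos hu]; push_cast; ring
    have hkey : 2 * ((((n - A.card) + (0 + ((n.choose 2 - (n - A.card).choose 2) + n))) : ℕ) : ℤ)
        = 2 * ((g : ℤ) * ((n : ℤ) + 1)) - (g : ℤ) * ((g : ℤ) + 1) + 2 := by
      push_cast [Nat.cast_sub han, Nat.cast_sub hchoosele]
      rw [hga]
      linear_combination h2C - h2C'
    set L := ((((n - A.card) + (0 + ((n.choose 2 - (n - A.card).choose 2) + n))) : ℕ) : ℤ) with hL
    set P := (g : ℤ) * ((n : ℤ) + 1) with hP
    set Q := (g : ℤ) * ((g : ℤ) + 1) with hQdef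
    clear_value L P Q
    omega
  · rw [if_neg hu, if_neg hu]
    have hga : (g : ℤ) = (A.card : ℤ) + 1 := by
      rw [hgval, if_neg hu]; push_cast; ring
    have hkey : 2 * ((((n - A.card) + (1 + ((n.choose 2 - (n - A.card).choose 2) + A.card))) : ℕ) : ℤ)
        = 2 * ((g : ℤ) * ((n : ℤ) + 1)) - (g : ℤ) * ((g : ℤ) + 1) + 2 := by
      push_cast [Nat.cast_sub han, Nat.cast_sub hchoosele]
      rw [hga]
      linear_combination h2C - h2C'
    set L := ((((n - A.card) + (1 + ((n.choose 2 - (n - A.card).choose 2) + A.card))) : ℕ) : ℤ) with hL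
    set P := (g : ℤ) * ((n : ℤ) + 1) with hP
    set Q := (g : ℤ) * ((g : ℤ) + 1) with hQdef
    clear_value L P Q
    omega
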